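/- High-probability Fano bound: let M ≥ 2 be an integer, θ₁,…,θ_M ∈ Θ, and P_j ∈ 𝒫_{θ_j} for each j ∈ {1,…,M}. Suppose there exists ε ∈ (0,1] such that (M^{−1}·inf_{Q} Σ_{j=1}^M KL(P_j,Q) + log(2−M^{−1}))/log M ≤ 1−ε, where the infimum is over all probability measures Q on X. Then, writing η := min_{1≤j<k≤M} d(θ_j,θ_k)/2, we have M_−(δ) ≥ g(η) for all δ ∈ (0,ε). -/

import Mathlib

open MeasureTheory ENNReal
open scoped Classical

/-- Log-sum inequality. -/
lemma myLogSum {ι : Type*} (s : Finset ι) (a b : ι → ℝ)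
    (ha : ∀ i ∈ s, 0 ≤ a i) (hb : ∀ i ∈ s, 0 ≤ b i)
    (hab : ∀ i ∈ s, b i = 0 → a i = 0) :
    (∑ i ∈ s, a i) * Real.log ((∑ i ∈ s, a i) / (∑ i ∈ s, b i)) ≤
      ∑ i ∈ s, a i * Real.log (a i / b i) := by
  set A := ∑ i ∈ s, a i with hA
  set B := ∑ i ∈ s, b i with hB
  rcases (Finset.sum_nonneg ha).eq_or_lt with h0 | hApos
  · have hai : ∀ i ∈ s, a i = 0 := (Finset.sum_eq_zero_iff_of_nonneg ha).mp h0.symm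
    have h1 : A = 0 := h0.symm
    have h2 : (∑ i ∈ s, a i * Real.log (a i / b i)) = 0 :=
      Finset.sum_eq_zero fun i hi => by rw [hai i hi, zero_mul]
    rw [h1, h2, zero_mul]
  · rw [← hA] at hApos
    have hBpos : 0 < B := by
      rcases (Finset.sum_nonneg hb).eq_or_lt with h0 | h
      · exfalso
        have hbi : ∀ i ∈ s, b i = 0 := (Finset.sum_eq_zero_iff_of_nonneg hb).mp h0.symm
        have : A = 0 := Finset.sum_eq_zero fun i hi => hab i hi (hbi i hi)
        exact absurd this hApos.ne'
      · exact h
    have key : ∀ i ∈ s, a i * Real.log (A / B) + (a i - b i * (A / B)) ≤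
        a i * Real.log (a i / b i) := by
      intro i hi
      rcases (ha i hi).eq_or_lt with h0 | hai
      · rw [← h0]
        have hba : 0 ≤ b i * (A / B) := mul_nonneg (hb i hi) (div_nonneg hApos.le hBpos.le)
        nlinarith [Real.log_nonneg (le_refl (1:ℝ))]
      · have hbi : 0 < b i := by
          rcases (hb i hi).eq_or_lt with h0 | h
          · exact absurd (hab i hi h0.symm) hai.ne'
          · exact h
        have hlog : Real.log (a i / b i) =
            Real.log (A / B) + Real.log ((a i * B) / (b i * A)) := by
          rw [Real.log_div hai.ne' hbi.ne', Real.log_div hApos.ne' hBpos.ne',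
            Real.log_div (mul_ne_zero hai.ne' hBpos.ne') (mul_ne_zero hbi.ne' hApos.ne'),
            Real.log_mul hai.ne' hBpos.ne', Real.log_mul hbi.ne' hApos.ne']
          ring
        have hge : 1 - (b i * A) / (a i * B) ≤ Real.log ((a i * B) / (b i * A)) := by
          have h := Real.one_sub_inv_le_log_of_pos (x := (a i * B) / (b i * A)) (div_pos (mul_pos hai hBpos) (mul_pos hbi hApos))
          rwa [inv_div] at h
        have h2 : a i * (1 - (b i * A) / (a i * B)) = a i - b i * (A / B) := by
          field_simp
        have h3 : a i - b i * (A / B) ≤ a i * Real.log ((a i * B) / (b i * A)) := by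
          rw [← h2]
          exact mul_le_mul_of_nonneg_left hge hai.le
        rw [hlog]
        nlinarith
    have hsum := Finset.sum_le_sum key
    have h4 : ∑ i ∈ s, (a i * Real.log (A / B) + (a i - b i * (A / B))) =
        A * Real.log (A / B) + (A - B * (A / B)) := by
      rw [Finset.sum_add_distrib, ← Finset.sum_mul, Finset.sum_sub_distrib, ← Finset.sum_mul]
    have h5 : B * (A / B) = A := mul_div_cancel₀ A hBpos.ne'
    rw [h4, h5] at hsum
    linarith

/-- Two-point log-sum inequality. -/
lemma myLogSum2 (a c b₁ b₂ : ℝ) (ha : 0 ≤ a) (hc : 0 ≤ c) (hb₁ : 0 < b₁) (hb₂ : 0 < b₂) :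
    (a + c) * Real.log ((a + c) / (b₁ + b₂)) ≤
      a * Real.log (a / b₁) + c * Real.log (c / b₂) := by
  have h := myLogSum (Finset.univ : Finset (Fin 2)) ![a, c] ![b₁, b₂]
    (by simp [Fin.forall_fin_two]; exact ⟨ha, hc⟩)
    (by simp [Fin.forall_fin_two]; exact ⟨hb₁.le, hb₂.le⟩)
    (by simp [Fin.forall_fin_two]; exact ⟨fun h => absurd h hb₁.ne', fun h => absurd h hb₂.ne'⟩)
  simpa [Fin.sum_univ_two] using h

lemma mySetIntegral_llr_ge {𝒳 : Type*} [MeasurableSpace 𝒳] (P Q : Measure 𝒳)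
    [IsProbabilityMeasure P] [IsProbabilityMeasure Q] (hPQ : P ≪ Q)
    (hInt : Integrable (llr P Q) P) {S : Set 𝒳} (hS : MeasurableSet S) :
    (P S).toReal * Real.log ((P S).toReal / (Q S).toReal) ≤ ∫ x in S, llr P Q x ∂P := by
  set F := P.rnDeriv Q with hF
  set f : 𝒳 → ℝ := fun x => (F x).toReal with hf
  have hmeasF : Measurable F := Measure.measurable_rnDeriv P Q
  have haeP : ∀ᵐ x ∂P, 0 < F x ∧ F x ≠ ⊤ := by
    filter_upwards [Measure.rnDeriv_pos hPQ, hPQ.ae_le (Measure.rnDeriv_lt_top P Q)] with x h1 h2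
    exact ⟨h1, h2.ne⟩
  have hofReal : ∀ᵐ x ∂P, ENNReal.ofReal ((f x)⁻¹) = (F x)⁻¹ := by
    filter_upwards [haeP] with x hx
    rw [hf]
    simp only
    rw [← ENNReal.toReal_inv, ENNReal.ofReal_toReal (by simp [hx.1.ne'])]
  have hlin : ∀ (S' : Set 𝒳), MeasurableSet S' →
      ∫⁻ x in S', ENNReal.ofReal ((f x)⁻¹) ∂P ≤ Q S' := by
    intro S' hS'
    rw [lintegral_congr_ae (ae_restrict_of_ae hofReal)]
    calc ∫⁻ x in S', (F x)⁻¹ ∂P = ∫⁻ x in S', F x * (F x)⁻¹ ∂Q :=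
          (MeasureTheory.setLIntegral_rnDeriv_mul hPQ (hmeasF.inv.aemeasurable) hS').symm
      _ ≤ ∫⁻ _ in S', 1 ∂Q := lintegral_mono fun x => ENNReal.mul_inv_le_one (F x)
      _ = Q S' := by simp
  have hmeasf : Measurable f := hmeasF.ennreal_toReal
  have hintinv : Integrable (fun x => (f x)⁻¹) P := by
    refine ⟨(hmeasf.inv).aestronglyMeasurable, ?_⟩
    rw [hasFiniteIntegral_iff_ofReal (Filter.Eventually.of_forall fun x => by positivity)]
    have h1 : ∫⁻ x, ENNReal.ofReal ((f x)⁻¹) ∂P ≤ Q Set.univ := by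
      have := hlin Set.univ MeasurableSet.univ
      rwa [Measure.restrict_univ] at this
    exact lt_of_le_of_lt h1 (by simp [lt_top_iff_ne_top])
  by_cases hp0 : P S = 0
  · have h1 : P.restrict S = 0 := Measure.restrict_eq_zero.mpr hp0
    rw [h1, integral_zero_measure, hp0]
    simp
  · have hq0 : Q S ≠ 0 := fun h => hp0 (hPQ h)
    set p := (P S).toReal with hp
    set q := (Q S).toReal with hq
    have hppos : 0 < p := ENNReal.toReal_pos hp0 (measure_ne_top P S)
    have hqpos : 0 < q := ENNReal.toReal_pos hq0 (measure_ne_top Q S)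
    have hptwise : ∀ᵐ x ∂(P.restrict S),
        Real.log (p / q) + 1 - (p / q) * (f x)⁻¹ ≤ llr P Q x := by
      refine ae_restrict_of_ae ?_
      filter_upwards [haeP] with x hx
      have hfx : 0 < f x := ENNReal.toReal_pos hx.1.ne' hx.2
      have hllr : llr P Q x = Real.log (f x) := rfl
      have hlogeq : Real.log (f x) = Real.log (p / q) + Real.log (f x * q / p) := by
        rw [Real.log_div (mul_ne_zero hfx.ne' hqpos.ne') hppos.ne',
          Real.log_mul hfx.ne' hqpos.ne', Real.log_div hppos.ne' hqpos.ne']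
        ring
      have h3 : 1 - (f x * q / p)⁻¹ ≤ Real.log (f x * q / p) :=
        Real.one_sub_inv_le_log_of_pos (by positivity)
      have h4 : (f x * q / p)⁻¹ = (p / q) * (f x)⁻¹ := by
        rw [div_eq_mul_inv, mul_inv, mul_inv, div_eq_mul_inv, inv_inv]
        ring
      rw [hllr, hlogeq]
      rw [h4] at h3
      linarith
    have hconst : Integrable (fun _ : 𝒳 => Real.log (p / q) + 1) (P.restrict S) :=
      integrable_const _
    have hint2 : Integrable (fun x => (p / q) * (f x)⁻¹) (P.restrict S) :=
      (hintinv.restrict).const_mul _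
    have hmono := integral_mono_ae (hconst.sub hint2) (hInt.restrict) hptwise
    have hcalc : ∫ x in S, (Real.log (p / q) + 1 - (p / q) * (f x)⁻¹) ∂P
        = (Real.log (p / q) + 1) * p - (p / q) * ∫ x in S, (f x)⁻¹ ∂P := by
      rw [show (fun x => Real.log (p / q) + 1 - (p / q) * (f x)⁻¹)
          = (fun x => (fun _ => Real.log (p / q) + 1) x - (fun y => (p / q) * (f y)⁻¹) x) from rfl,
        integral_sub hconst hint2, integral_const, integral_const_mul]
      simp only [smul_eq_mul, measureReal_restrict_apply_univ, Measure.real, Measure.restrict_apply_univ, ← hp]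
      ring
    have hbound : ∫ x in S, (f x)⁻¹ ∂P ≤ q := by
      rw [integral_eq_lintegral_of_nonneg_ae (f := fun x => (f x)⁻¹)
        (Filter.Eventually.of_forall fun x => by positivity)
        (hmeasf.inv).aestronglyMeasurable]
      have h5 := hlin S hS
      calc (∫⁻ x in S, ENNReal.ofReal ((f x)⁻¹) ∂P).toReal ≤ (Q S).toReal :=
            ENNReal.toReal_mono (measure_ne_top Q S) h5
        _ = q := rfl
    have h6 : (p / q) * (∫ x in S, (f x)⁻¹ ∂P) ≤ (p / q) * q :=
      mul_le_mul_of_nonneg_left hbound (by positivity)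
    have h7 : (p / q) * q = p := by field_simp
    simp only [Pi.sub_apply] at hmono
    rw [hcalc] at hmono
    nlinarith

/-- The lower minimax `(1-δ)`th quantile. -/
noncomputable def lowerMinimaxQuantile {Θ 𝒳 : Type*} [MeasurableSpace Θ] [MeasurableSpace 𝒳]
    (Pfam : Θ → Set (Measure 𝒳)) (L : Θ → Θ → ℝ) (δ : ℝ) : ℝ≥0∞ :=
  sInf {r : ℝ≥0∞ |
    (⨅ T : {f : 𝒳 → Θ // Measurable f}, ⨆ θ : Θ, ⨆ P ∈ Pfam θ,
      P {x | r < ENNReal.ofReal (L (T.1 x) θ)}) ≤ ENNReal.ofReal δ}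

/-- Kullback--Leibler divergence: `∫ log(dP/dQ) dP` when `P ≪ Q` (and the log-likelihood
ratio is `P`-integrable), and `+∞` otherwise. -/
noncomputable def klDiv' {𝒳 : Type*} [MeasurableSpace 𝒳] (P Q : Measure 𝒳) : ℝ≥0∞ :=
  if P ≪ Q ∧ Integrable (llr P Q) P then ENNReal.ofReal (∫ x, llr P Q x ∂P) else ⊤

set_option maxHeartbeats 1000000 in
/-- high-probability Fano bound. -/
theorem lowerMinimaxQuantile_ge_of_fano
    {Θ 𝒳 : Type*} [PseudoMetricSpace Θ] [Nonempty Θ] [MeasurableSpace Θ] [BorelSpace Θ]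
    [MeasurableSpace 𝒳]
    (Pfam : Θ → Set (Measure 𝒳)) (hPfam : ∀ θ, ∀ P ∈ Pfam θ, IsProbabilityMeasure P)
    (g : ℝ → ℝ) (hg : MonotoneOn g (Set.Ici 0)) (hg0 : ∀ x ∈ Set.Ici (0 : ℝ), 0 ≤ g x)
    (M : ℕ) (hM : 2 ≤ M) (θ : Fin M → Θ) (P : Fin M → Measure 𝒳)
    (hP : ∀ j, P j ∈ Pfam (θ j))
    (ε : ℝ) (hε : ε ∈ Set.Ioc (0 : ℝ) 1)
    (hfin : (⨅ Q : {Q : Measure 𝒳 // IsProbabilityMeasure Q},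
      ∑ j : Fin M, klDiv' (P j) Q.1) ≠ ⊤)
    (hcond :
      ((M : ℝ)⁻¹ * (⨅ Q : {Q : Measure 𝒳 // IsProbabilityMeasure Q},
          ∑ j : Fin M, klDiv' (P j) Q.1).toReal + Real.log (2 - (M : ℝ)⁻¹)) / Real.log M
        ≤ 1 - ε) :
    ∀ δ : ℝ, 0 < δ → δ < ε →
      ENNReal.ofReal
          (g ((⨅ p : {p : Fin M × Fin M // p.1 ≠ p.2}, dist (θ p.1.1) (θ p.1.2)) / 2)) ≤
        lowerMinimaxQuantile Pfam (fun a b => g (dist a b)) δ := by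
  intro δ hδ0 hδε
  obtain ⟨hε0, hε1⟩ := hε
  haveI hPprob : ∀ j, IsProbabilityMeasure (P j) := fun j => hPfam _ _ (hP j)
  haveI : Nonempty (Fin M) := ⟨⟨0, by omega⟩⟩
  set η : ℝ := ⨅ p : {p : Fin M × Fin M // p.1 ≠ p.2}, dist (θ p.1.1) (θ p.1.2) with hηdef
  have hM2 : (2:ℝ) ≤ (M:ℝ) := by exact_mod_cast hM
  have hM0 : (0:ℝ) < M := by linarith
  have hlogM : 0 < Real.log M := Real.log_pos (by linarith)
  have hMinv : (0:ℝ) < 2 - (M:ℝ)⁻¹ := by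
    have h1 : (M:ℝ)⁻¹ ≤ (2:ℝ)⁻¹ := by
      apply inv_anti₀ (by norm_num) hM2
    norm_num at h1 ⊢
    linarith
  have hη0 : 0 ≤ η := Real.iInf_nonneg fun p => dist_nonneg
  have hηle : ∀ (j k : Fin M), j ≠ k → η ≤ dist (θ j) (θ k) := fun j k hjk =>
    ciInf_le (Set.Finite.bddBelow (Set.finite_range _)) (⟨(j, k), hjk⟩ : {p : Fin M × Fin M // p.1 ≠ p.2})
  unfold lowerMinimaxQuantile
  refine le_sInf fun r hr => ?_
  simp only [Set.mem_setOf_eq] at hr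
  by_contra hltc
  push_neg at hltc
  have key : ∀ T : {f : 𝒳 → Θ // Measurable f},
      ENNReal.ofReal ε ≤ ⨆ θ' : Θ, ⨆ P' ∈ Pfam θ',
        P' {x | r < ENNReal.ofReal (g (dist (T.1 x) θ'))} := by
    intro T
    have hmeasd : ∀ j : Fin M, Measurable fun x => dist (T.1 x) (θ j) := fun j =>
      (Continuous.dist continuous_id continuous_const).measurable.comp T.2
    set C : Fin M → Set 𝒳 :=
      fun j => {x | ∀ k, dist (T.1 x) (θ j) ≤ dist (T.1 x) (θ k)} with hCdef
    have hCmeas : ∀ j, MeasurableSet (C j) := by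
      intro j
      have hCeq : C j = ⋂ k, {x | dist (T.1 x) (θ j) ≤ dist (T.1 x) (θ k)} := by
        ext x; simp [hCdef, Set.mem_iInter]
      rw [hCeq]
      exact MeasurableSet.iInter fun k => measurableSet_le (hmeasd j) (hmeasd k)
    set A : Fin M → Set 𝒳 := fun j => C j \ ⋃ i, ⋃ (_ : i < j), C i with hAdef
    have hAmeas : ∀ j, MeasurableSet (A j) := fun j =>
      (hCmeas j).diff (MeasurableSet.iUnion fun i => MeasurableSet.iUnion fun _ => hCmeas i)
    have hdisj0 : ∀ i j : Fin M, i < j → Disjoint (A i) (A j) := by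
      intro i j h
      refine Set.disjoint_left.mpr fun x hxi hxj => ?_
      exact hxj.2 (Set.mem_iUnion.mpr ⟨i, Set.mem_iUnion.mpr ⟨h, hxi.1⟩⟩)
    have hdisj : Pairwise (Function.onFun Disjoint A) := by
      intro i j hij
      rcases hij.lt_or_gt with h | h
      · exact hdisj0 i j h
      · exact (hdisj0 j i h).symm
    have hcover : ⋃ j, A j = Set.univ := by
      ext x
      simp only [Set.mem_univ, iff_true, Set.mem_iUnion]
      have hne : (Finset.univ.filter fun j => x ∈ C j).Nonempty := by
        obtain ⟨j, _, hj⟩ := Finset.exists_min_image Finset.univ (fun j => dist (T.1 x) (θ j))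
          ⟨⟨0, by omega⟩, Finset.mem_univ _⟩
        exact ⟨j, Finset.mem_filter.mpr ⟨Finset.mem_univ _, fun k => hj k (Finset.mem_univ _)⟩⟩
      refine ⟨(Finset.univ.filter fun j => x ∈ C j).min' hne,
        (Finset.mem_filter.mp (Finset.min'_mem _ hne)).2, fun hmem => ?_⟩
      obtain ⟨i, hi⟩ := Set.mem_iUnion.mp hmem
      obtain ⟨hilt, hiC⟩ := Set.mem_iUnion.mp hi
      have hle := Finset.min'_le (Finset.univ.filter fun j => x ∈ C j) i
        (Finset.mem_filter.mpr ⟨Finset.mem_univ _, hiC⟩)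
      exact absurd hilt (not_lt.mpr hle)
    have hkey : ∀ x j, dist (T.1 x) (θ j) < η / 2 → x ∈ A j := by
      intro x j hx
      have hCj : x ∈ C j := by
        intro k
        by_cases hk : k = j
        · rw [hk]
        · have h1 := hηle j k (fun h => hk h.symm)
          have h2 := dist_triangle (θ j) (T.1 x) (θ k)
          have h3 := dist_comm (θ j) (T.1 x)
          linarith
      refine ⟨hCj, fun hmem => ?_⟩
      obtain ⟨i, hi⟩ := Set.mem_iUnion.mp hmem
      obtain ⟨hilt, hiC⟩ := Set.mem_iUnion.mp hi
      have h1 := hiC j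
      have h2 := hηle i j (ne_of_lt hilt)
      have h3 := dist_triangle (θ i) (T.1 x) (θ j)
      have h4 := dist_comm (θ i) (T.1 x)
      linarith
    set pj : Fin M → ℝ := fun j => ((P j) (A j)).toReal with hpjdef
    have hpj0 : ∀ j, 0 ≤ pj j := fun j => ENNReal.toReal_nonneg
    have hpj1 : ∀ j, pj j ≤ 1 := by
      intro j
      have h := ENNReal.toReal_mono ENNReal.one_ne_top (prob_le_one (μ := P j) (s := A j))
      simpa using h
    have hcomplP : ∀ j, ((P j) (A j)ᶜ).toReal = 1 - pj j := by
      intro j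
      rw [measure_compl (hAmeas j) (measure_ne_top _ _), measure_univ,
        ENNReal.toReal_sub_of_le prob_le_one ENNReal.one_ne_top, ENNReal.toReal_one]
    set Sp := ∑ j, pj j with hSpdef
    have hSp0 : 0 ≤ Sp := Finset.sum_nonneg fun j _ => hpj0 j
    have hSpM : Sp ≤ M := by
      calc Sp ≤ ∑ _j : Fin M, (1:ℝ) := Finset.sum_le_sum fun j _ => hpj1 j
        _ = M := by simp
    have hQbound : ∀ Q : {Q : Measure 𝒳 // IsProbabilityMeasure Q},
        ENNReal.ofReal (Sp * Real.log M - M * Real.log (2 - (M:ℝ)⁻¹)) ≤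
          ∑ j, klDiv' (P j) Q.1 := by
      rintro ⟨Q, hQ⟩
      haveI := hQ
      by_cases hall : ∀ j, P j ≪ Q ∧ Integrable (llr (P j) Q) (P j)
      swap
      · obtain ⟨j, hj⟩ := not_forall.mp hall
        have hTop : klDiv' (P j) Q = ⊤ := if_neg hj
        rw [ENNReal.sum_eq_top.mpr ⟨j, Finset.mem_univ j, hTop⟩]
        exact le_top
      · have hKL : ∀ j, klDiv' (P j) Q = ENNReal.ofReal (∫ x, llr (P j) Q x ∂(P j)) :=
          fun j => if_pos (hall j)
        set K : Fin M → ℝ := fun j => ∫ x, llr (P j) Q x ∂(P j) with hKdef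
        have hK0 : ∀ j, 0 ≤ K j := by
          intro j
          have h := mySetIntegral_llr_ge (P j) Q (hall j).1 (hall j).2 MeasurableSet.univ
          rw [Measure.restrict_univ] at h
          simpa using h
        set qj : Fin M → ℝ := fun j => (Q (A j)).toReal with hqjdef
        have hqj0 : ∀ j, 0 ≤ qj j := fun j => ENNReal.toReal_nonneg
        have hcomplQ : ∀ j, (Q (A j)ᶜ).toReal = 1 - qj j := by
          intro j
          rw [measure_compl (hAmeas j) (measure_ne_top _ _), measure_univ,
            ENNReal.toReal_sub_of_le prob_le_one ENNReal.one_ne_top, ENNReal.toReal_one]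
        have hsumQ : ∑ j, qj j = 1 := by
          rw [← ENNReal.toReal_sum (fun j _ => measure_ne_top Q (A j))]
          have h1 : ∑ j, Q (A j) = 1 := by
            rw [← tsum_fintype (L := .unconditional _), ← measure_iUnion hdisj hAmeas, hcover, measure_univ]
          rw [h1, ENNReal.toReal_one]
        have hDP : ∀ j, pj j * Real.log (pj j / qj j)
            + (1 - pj j) * Real.log ((1 - pj j) / (1 - qj j)) ≤ K j := by
          intro j
          have h1 := mySetIntegral_llr_ge (P j) Q (hall j).1 (hall j).2 (hAmeas j)
          have h2 := mySetIntegral_llr_ge (P j) Q (hall j).1 (hall j).2 (hAmeas j).compl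
          rw [hcomplP j, hcomplQ j] at h2
          have h3 := integral_add_compl (hAmeas j) (hall j).2
          linarith
        have himp1 : ∀ j ∈ Finset.univ, qj j = 0 → pj j = 0 := by
          intro j _ h
          have hq : Q (A j) = 0 :=
            ((ENNReal.toReal_eq_zero_iff _).mp h).resolve_right (measure_ne_top Q (A j))
          have hp' : (P j) (A j) = 0 := (hall j).1 hq
          simp [hpjdef, hp']
        have himp2 : ∀ j ∈ Finset.univ, (1:ℝ) - qj j = 0 → (1:ℝ) - pj j = 0 := by
          intro j _ h
          have h' : (Q (A j)ᶜ).toReal = 0 := by rw [hcomplQ j]; exact h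
          have hq : Q (A j)ᶜ = 0 :=
            ((ENNReal.toReal_eq_zero_iff _).mp h').resolve_right (measure_ne_top _ _)
          have hp' : (P j) (A j)ᶜ = 0 := (hall j).1 hq
          rw [← hcomplP j, hp']
          simp
        have hls1 := myLogSum Finset.univ pj qj (fun j _ => hpj0 j) (fun j _ => hqj0 j) himp1
        have hls2 := myLogSum Finset.univ (fun j => 1 - pj j) (fun j => 1 - qj j)
          (fun j _ => by
            show (0:ℝ) ≤ 1 - pj j
            linarith [hpj1 j]) (fun j _ => by
            show (0:ℝ) ≤ 1 - qj j
            have := ENNReal.toReal_mono ENNReal.one_ne_top (prob_le_one (μ := Q) (s := A j))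
            simp only [ENNReal.toReal_one] at this
            linarith) himp2
        have hsum1p : ∑ j, ((1:ℝ) - pj j) = M - Sp := by
          rw [Finset.sum_sub_distrib]
          simp [hSpdef]
        have hsum1q : ∑ j, ((1:ℝ) - qj j) = (M:ℝ) - 1 := by
          rw [Finset.sum_sub_distrib, hsumQ]
          simp
        rw [hsumQ] at hls1
        rw [hsum1p, hsum1q] at hls2
        have hmain : Sp * Real.log M - M * Real.log (2 - (M:ℝ)⁻¹) ≤ ∑ j, K j := by
          have hb1 : (0:ℝ) < (M:ℝ) / (2 - (M:ℝ)⁻¹) := div_pos hM0 hMinv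
          have hb2 : (0:ℝ) < ((M:ℝ) - 1) / (2 - (M:ℝ)⁻¹) := div_pos (by linarith) hMinv
          have hbsum : (M:ℝ) / (2 - (M:ℝ)⁻¹) + ((M:ℝ) - 1) / (2 - (M:ℝ)⁻¹) = M := by
            rw [← add_div, div_eq_iff hMinv.ne', mul_sub, mul_inv_cancel₀ hM0.ne']
            ring
          have h2pt := myLogSum2 Sp ((M:ℝ) - Sp) ((M:ℝ) / (2 - (M:ℝ)⁻¹))
            (((M:ℝ) - 1) / (2 - (M:ℝ)⁻¹)) hSp0 (by linarith) hb1 hb2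
          rw [hbsum, show Sp + ((M:ℝ) - Sp) = (M:ℝ) by ring, div_self hM0.ne',
            Real.log_one, mul_zero] at h2pt
          have e1 : Sp * Real.log (Sp / ((M:ℝ) / (2 - (M:ℝ)⁻¹)))
              = Sp * Real.log (Sp / 1) - Sp * Real.log M + Sp * Real.log (2 - (M:ℝ)⁻¹) := by
            rcases hSp0.eq_or_lt with h0 | h0
            · rw [← h0]; ring
            · rw [div_one, Real.log_div h0.ne' hb1.ne', Real.log_div hM0.ne' hMinv.ne']
              ring
          have e2 : ((M:ℝ) - Sp) * Real.log (((M:ℝ) - Sp) / (((M:ℝ) - 1) / (2 - (M:ℝ)⁻¹)))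
              = ((M:ℝ) - Sp) * Real.log (((M:ℝ) - Sp) / ((M:ℝ) - 1))
                + ((M:ℝ) - Sp) * Real.log (2 - (M:ℝ)⁻¹) := by
            rcases (sub_nonneg.mpr hSpM).eq_or_lt with h0 | h0
            · rw [← h0]; ring
            · rw [Real.log_div h0.ne' hb2.ne', Real.log_div h0.ne' (by linarith : (M:ℝ) - 1 ≠ 0),
                Real.log_div (by linarith : (M:ℝ) - 1 ≠ 0) hMinv.ne']
              ring
          have hsumDP : ∑ j, (pj j * Real.log (pj j / qj j)
              + (1 - pj j) * Real.log ((1 - pj j) / (1 - qj j))) ≤ ∑ j, K j :=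
            Finset.sum_le_sum fun j _ => hDP j
          rw [Finset.sum_add_distrib] at hsumDP
          nlinarith [hls1, hls2, h2pt, e1, e2, hsumDP]
        calc ENNReal.ofReal (Sp * Real.log M - M * Real.log (2 - (M:ℝ)⁻¹))
            ≤ ENNReal.ofReal (∑ j, K j) := ENNReal.ofReal_le_ofReal hmain
          _ = ∑ j, ENNReal.ofReal (K j) := ENNReal.ofReal_sum_of_nonneg (fun j _ => hK0 j)
          _ = ∑ j, klDiv' (P j) Q := Finset.sum_congr rfl fun j _ => (hKL j).symm
    have hIb : Sp * Real.log M - M * Real.log (2 - (M:ℝ)⁻¹) ≤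
        (⨅ Q : {Q : Measure 𝒳 // IsProbabilityMeasure Q},
          ∑ j : Fin M, klDiv' (P j) Q.1).toReal := by
      have h1 := le_iInf hQbound
      have h2 := ENNReal.toReal_mono hfin h1
      rw [ENNReal.toReal_ofReal'] at h2
      exact le_trans (le_max_left _ _) h2
    have hcond2 : (M:ℝ)⁻¹ * (⨅ Q : {Q : Measure 𝒳 // IsProbabilityMeasure Q},
        ∑ j : Fin M, klDiv' (P j) Q.1).toReal + Real.log (2 - (M:ℝ)⁻¹)
          ≤ (1 - ε) * Real.log M := by
      rw [div_le_iff₀ hlogM] at hcond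
      exact hcond
    have hSpfin : Sp ≤ (1 - ε) * M := by
      set I := (⨅ Q : {Q : Measure 𝒳 // IsProbabilityMeasure Q},
        ∑ j : Fin M, klDiv' (P j) Q.1).toReal with hIdef
      have h3 : I ≤ M * ((1 - ε) * Real.log M - Real.log (2 - (M:ℝ)⁻¹)) := by
        have h4 := mul_le_mul_of_nonneg_left hcond2 hM0.le
        rw [mul_add, ← mul_assoc, mul_inv_cancel₀ hM0.ne', one_mul] at h4
        linarith
      have h5 : Sp * Real.log M ≤ ((1 - ε) * M) * Real.log M := by nlinarith [hIb, h3]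
      exact (mul_le_mul_iff_left₀ hlogM).mp h5
    have hex : ∃ j, ε ≤ 1 - pj j := by
      by_contra hcon
      push_neg at hcon
      have hlt2 : ∑ j, ((1:ℝ) - pj j) < ∑ _j : Fin M, ε :=
        Finset.sum_lt_sum_of_nonempty Finset.univ_nonempty fun j _ => hcon j
      have hsum1p : ∑ j, ((1:ℝ) - pj j) = M - Sp := by
        rw [Finset.sum_sub_distrib]
        simp [hSpdef]
      rw [hsum1p] at hlt2
      simp only [Finset.sum_const, Finset.card_univ, Fintype.card_fin, nsmul_eq_mul] at hlt2
      nlinarith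
    obtain ⟨j, hj⟩ := hex
    have hsub : (A j)ᶜ ⊆ {x | r < ENNReal.ofReal (g (dist (T.1 x) (θ j)))} := by
      intro x hx
      have hdist : η / 2 ≤ dist (T.1 x) (θ j) := by
        by_contra h
        push_neg at h
        exact hx (hkey x j h)
      have hg2 : g (η / 2) ≤ g (dist (T.1 x) (θ j)) :=
        hg (Set.mem_Ici.mpr (by linarith)) (Set.mem_Ici.mpr dist_nonneg) hdist
      exact lt_of_lt_of_le hltc (ENNReal.ofReal_le_ofReal hg2)
    calc ENNReal.ofReal ε ≤ ENNReal.ofReal (1 - pj j) := ENNReal.ofReal_le_ofReal hj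
      _ = (P j) (A j)ᶜ := by rw [← hcomplP j, ENNReal.ofReal_toReal (measure_ne_top _ _)]
      _ ≤ (P j) {x | r < ENNReal.ofReal (g (dist (T.1 x) (θ j)))} := measure_mono hsub
      _ ≤ ⨆ θ' : Θ, ⨆ P' ∈ Pfam θ', P' {x | r < ENNReal.ofReal (g (dist (T.1 x) θ'))} :=
        le_iSup_of_le (θ j) (le_iSup₂_of_le (P j) (hP j) le_rfl)
  have hfin2 : ENNReal.ofReal ε ≤ ENNReal.ofReal δ := le_trans (le_iInf key) hr
  have hεδ : ε ≤ δ := (ENNReal.ofReal_le_ofReal_iff hδ0.le).mp hfin2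
  linarith
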